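/- Suppose c ∈ C_b^s(X²) is s-Hölder continuous with constant L_c (0 < s ≤ 1), λ > 0, μ, ν probability measures on X, and g: X → ℝ bounded with ‖g‖_∞ ≤ ‖c‖_∞. Then the function f(x) = -λ log ∫ exp((g(y)-c(x,y))/λ) dν(y) is s-Hölder continuous with Hölder constant at most L_c; that is, |f(x) - f(x')| ≤ L_c d(x,x')^s for all x, x'. -/

import Mathlib

open MeasureTheory Real

/-- If `c` is `s`-Hölder in its first argument with constant `L_c` and `g` is
bounded, then the soft-min potential `f(x) = -λ log ∫ exp((g y - c x y)/λ) dν(y)` is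
`s`-Hölder with constant at most `L_c`. -/
theorem softmin_potential_holder
    {X : Type*} [MetricSpace X] [MeasurableSpace X] [BorelSpace X]
    (ν : Measure X) [IsProbabilityMeasure ν]
    (c : X → X → ℝ) (Cc : ℝ)
    (hc_cont : Continuous (Function.uncurry c))
    (hc_nonneg : ∀ x y, 0 ≤ c x y)
    (hc_bdd : ∀ x y, c x y ≤ Cc)
    (s L : ℝ) (hs : 0 < s) (hs1 : s ≤ 1) (hL : 0 ≤ L)
    (hc_holder : ∀ x x' y, |c x y - c x' y| ≤ L * dist x x' ^ s)
    (lam : ℝ) (hlam : 0 < lam)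
    (g : X → ℝ) (hg_meas : Measurable g) (hg_bdd : ∀ y, |g y| ≤ Cc)
    (f : X → ℝ)
    (hf : ∀ x, f x = -lam * Real.log (∫ y, Real.exp ((g y - c x y) / lam) ∂ν)) :
    ∀ x x', |f x - f x'| ≤ L * dist x x' ^ s := by
  intro x x'
  set I : X → ℝ := fun z => ∫ y, Real.exp ((g y - c z y) / lam) ∂ν with hI
  have hmeas : ∀ z : X, Measurable fun y => Real.exp ((g y - c z y) / lam) := by
    intro z
    have hcz : Continuous fun y => c z y := hc_cont.comp (Continuous.prodMk_right z)
    exact ((hg_meas.sub hcz.measurable).div_const lam).exp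
  have hint : ∀ z : X, Integrable (fun y => Real.exp ((g y - c z y) / lam)) ν := by
    intro z
    refine (integrable_const (Real.exp (Cc / lam))).mono'
      (hmeas z).aestronglyMeasurable (ae_of_all _ fun y => ?_)
    rw [Real.norm_eq_abs, abs_of_pos (Real.exp_pos _)]
    apply Real.exp_le_exp.2
    apply div_le_div_of_nonneg_right ?_ hlam.le
    have h1 := hg_bdd y
    have h2 := hc_nonneg z y
    rw [abs_le] at h1
    linarith
  have hpos : ∀ z : X, 0 < I z := by
    intro z
    have h1 : Real.exp (-(2 * Cc) / lam) ≤ I z := by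
      have := integral_mono (μ := ν) (integrable_const (Real.exp (-(2 * Cc) / lam)))
        (hint z) (fun y => ?_)
      · simpa using this
      · apply Real.exp_le_exp.2
        apply div_le_div_of_nonneg_right ?_ hlam.le
        have h1 := hg_bdd y
        have h2 := hc_bdd z y
        rw [abs_le] at h1
        linarith
    exact lt_of_lt_of_le (Real.exp_pos _) h1
  have key : ∀ a b : X, Real.log (I a) ≤ Real.log (I b) + L * dist a b ^ s / lam := by
    intro a b
    have hmono : I a ≤ Real.exp (L * dist a b ^ s / lam) * I b := by
      calc I a ≤ ∫ y, Real.exp (L * dist a b ^ s / lam) * Real.exp ((g y - c b y) / lam) ∂ν := by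
            apply integral_mono (hint a) ((hint b).const_mul _)
            intro y
            dsimp only
            rw [← Real.exp_add, ← add_div]
            apply Real.exp_le_exp.2
            apply div_le_div_of_nonneg_right ?_ hlam.le
            have h := hc_holder a b y
            rw [abs_le] at h
            linarith [h.1]
        _ = Real.exp (L * dist a b ^ s / lam) * I b := integral_const_mul _ _
    have hlog := Real.log_le_log (hpos a) hmono
    rwa [Real.log_mul (Real.exp_ne_zero _) (hpos b).ne', Real.log_exp, add_comm] at hlog
  have k1 := key x x'
  have k2 := key x' x
  rw [dist_comm x' x] at k2
  have hdiv : L * dist x x' ^ s / lam * lam = L * dist x x' ^ s :=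
    div_mul_cancel₀ _ hlam.ne'
  rw [hf x, hf x', abs_sub_le_iff]
  constructor <;> nlinarith [k1, k2, hdiv, hlam]
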